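/- A bipartite graph is a Stick graph (for some vertex orderings) iff its matrix can be permuted to avoid P1, P2, P3: Let M : Fin n → Fin m → Bool. There exist permutations σ of Fin n and τ of Fin m and a Stick order for the permuted matrix M' i p := M (σ i) (τ p) if and only if there exist permutations σ, τ such that M' contains none of the patterns P1, P2, P3 (as defined via ordered index triples/pairs). -/

import Mathlib

def StickOrder {n m : ℕ} (M : Fin n → Fin m → Bool) : Prop :=
  ∃ (ra : Fin n → ℕ) (rb : Fin m → ℕ),
    StrictMono ra ∧ StrictMono rb ∧ (∀ i p, ra i ≠ rb p) ∧
    ∀ j p, M j p = true ↔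
      (ra j < rb p ∧ (∃ q, p ≤ q ∧ M j q = true) ∧ (∃ i, i ≤ j ∧ M i p = true))

def HEdge {n m : ℕ} (M : Fin n → Fin m → Bool) :
    Fin n ⊕ Fin m → Fin n ⊕ Fin m → Prop
  | Sum.inl i, Sum.inl i' => i < i'
  | Sum.inr p, Sum.inr p' => p < p'
  | Sum.inl i, Sum.inr p => M i p = true
  | Sum.inr p, Sum.inl j =>
      ∃ i, i < j ∧ ∃ q, p < q ∧ M i p = true ∧ M j p = false ∧ M j q = true

def P1 {n m : ℕ} (M : Fin n → Fin m → Bool) : Prop :=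
  ∃ i j k : Fin n, i < j ∧ j < k ∧ ∃ p q r : Fin m, p < q ∧ q < r ∧
    M i q = true ∧ M j q = false ∧ M j r = true ∧ M k p = true

def P2 {n m : ℕ} (M : Fin n → Fin m → Bool) : Prop :=
  ∃ i j k : Fin n, i < j ∧ j < k ∧ ∃ p q : Fin m, p < q ∧
    M i p = true ∧ M j p = false ∧ M j q = true ∧ M k p = true

def P3 {n m : ℕ} (M : Fin n → Fin m → Bool) : Prop :=
  ∃ i j : Fin n, i < j ∧ ∃ p q r : Fin m, p < q ∧ q < r ∧
    M i q = true ∧ M j p = true ∧ M j q = false ∧ M j r = true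

section Aux

variable {n m : ℕ}

/-- The "column before row" condition of `HEdge`. -/
def SCond (N : Fin n → Fin m → Bool) (p : Fin m) (j : Fin n) : Prop :=
  ∃ i, i < j ∧ ∃ q, p < q ∧ N i p = true ∧ N j p = false ∧ N j q = true

lemma scond_iff (N : Fin n → Fin m → Bool) (p : Fin m) (j : Fin n) :
    HEdge N (Sum.inr p) (Sum.inl j) ↔ SCond N p j := Iff.rfl

/-- Composition lemma A : an `X` edge followed (weakly in column order) by an `S` edge
forces strict row increase, else a forbidden pattern occurs. -/
lemma lemA {N : Fin n → Fin m → Bool} (h1 : ¬ P1 N) (h2 : ¬ P2 N) (h3 : ¬ P3 N)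
    {j j'' : Fin n} {p p' : Fin m}
    (hN : N j p = true) (hpp : p ≤ p') (hS : SCond N p' j'') : j < j'' := by
  obtain ⟨i, hij, q, hpq, hip, hjp, hjq⟩ := hS
  by_contra hle
  push_neg at hle
  rcases lt_or_eq_of_le hpp with hppl | rfl
  · rcases lt_or_eq_of_le hle with hlel | rfl
    · exact h1 ⟨_, _, _, hij, hlel, _, _, _, hppl, hpq, hip, hjp, hjq, hN⟩
    · exact h3 ⟨_, _, hij, _, _, _, hppl, hpq, hip, hN, hjp, hjq⟩
  · have hne : j'' ≠ j := fun h => by rw [h, hN] at hjp; simp at hjp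
    exact h2 ⟨_, _, _, hij, lt_of_le_of_ne hle hne, _, _, hpq, hip, hjp, hjq, hN⟩

/-- Composition lemma B : an `S` edge followed (weakly in row order) by an `X` edge
forces strict column increase, else a forbidden pattern occurs. -/
lemma lemB {N : Fin n → Fin m → Bool} (h1 : ¬ P1 N) (h2 : ¬ P2 N) (h3 : ¬ P3 N)
    {j j' : Fin n} {p p' : Fin m}
    (hS : SCond N p j) (hjj : j ≤ j') (hN : N j' p' = true) : p < p' := by
  obtain ⟨i, hij, q, hpq, hip, hjp, hjq⟩ := hS
  by_contra hle
  push_neg at hle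
  rcases lt_or_eq_of_le hjj with hjjl | rfl
  · rcases lt_or_eq_of_le hle with hlel | rfl
    · exact h1 ⟨_, _, _, hij, hjjl, _, _, _, hlel, hpq, hip, hjp, hjq, hN⟩
    · exact h2 ⟨_, _, _, hij, hjjl, _, _, hpq, hip, hjp, hjq, hN⟩
  · have hne : p' ≠ p := fun h => by rw [h] at hN; rw [hN] at hjp; simp at hjp
    exact h3 ⟨_, _, hij, _, _, _, lt_of_le_of_ne hle hne, hpq, hip, hN, hjp, hjq⟩

/-- Invariant absorbed by `HEdge`-paths. -/
def FRel (N : Fin n → Fin m → Bool) : Fin n ⊕ Fin m → Fin n ⊕ Fin m → Prop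
  | Sum.inl j, Sum.inl j' => j < j'
  | Sum.inr p, Sum.inr p' => p < p'
  | Sum.inl j, Sum.inr p => ∃ j', j ≤ j' ∧ ∃ p', p' ≤ p ∧ N j' p' = true
  | Sum.inr p, Sum.inl j => ∃ p', p ≤ p' ∧ ∃ j', j' ≤ j ∧ SCond N p' j'

lemma hedge_F {N : Fin n → Fin m → Bool} :
    ∀ {x y}, HEdge N x y → FRel N x y := by
  rintro (j | p) (j' | p') h
  · exact h
  · exact ⟨j, le_refl _, p', le_refl _, h⟩
  · exact ⟨p, le_refl _, j', le_refl _, h⟩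
  · exact h

lemma F_step {N : Fin n → Fin m → Bool} (h1 : ¬ P1 N) (h2 : ¬ P2 N) (h3 : ¬ P3 N) :
    ∀ {x y z}, FRel N x y → HEdge N y z → FRel N x z := by
  rintro (j | p) (j' | p') (j'' | p'') hF hH
  · exact lt_trans hF hH
  · exact ⟨j', le_of_lt hF, p'', le_refl _, hH⟩
  · obtain ⟨j1, hj1, p1, hp1, hN1⟩ := hF
    -- hH : SCond N p' j'' ; hN1 : N j1 p1, p1 ≤ p'
    exact lt_of_le_of_lt hj1 (lemA h1 h2 h3 hN1 hp1 hH)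
  · obtain ⟨j1, hj1, p1, hp1, hN1⟩ := hF
    exact ⟨j1, hj1, p1, le_trans hp1 (le_of_lt hH), hN1⟩
  · obtain ⟨p1, hp1, j1, hj1, hS1⟩ := hF
    exact ⟨p1, hp1, j1, le_trans hj1 (le_of_lt hH), hS1⟩
  · obtain ⟨p1, hp1, j1, hj1, hS1⟩ := hF
    -- hH : N j' p''
    exact lt_of_le_of_lt hp1 (lemB h1 h2 h3 hS1 hj1 hH)
  · exact ⟨p', le_of_lt hF, j'', le_refl _, hH⟩
  · exact lt_trans hF hH

lemma transGen_F {N : Fin n → Fin m → Bool} (h1 : ¬ P1 N) (h2 : ¬ P2 N) (h3 : ¬ P3 N)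
    {x y} (h : Relation.TransGen (HEdge N) x y) : FRel N x y := by
  induction h with
  | single h => exact hedge_F h
  | tail _ h ih => exact F_step h1 h2 h3 ih h

lemma transGen_irrefl {N : Fin n → Fin m → Bool}
    (h1 : ¬ P1 N) (h2 : ¬ P2 N) (h3 : ¬ P3 N) (x) :
    ¬ Relation.TransGen (HEdge N) x x := by
  intro h
  have := transGen_F h1 h2 h3 h
  cases x with
  | inl j => exact lt_irrefl j this
  | inr p => exact lt_irrefl p this

/-- The key construction: a pattern-free matrix admits a Stick order. -/
theorem noPatterns_stickOrder {N : Fin n → Fin m → Bool}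
    (h1 : ¬ P1 N) (h2 : ¬ P2 N) (h3 : ¬ P3 N) : StickOrder N := by
  classical
  set T : (Fin n ⊕ Fin m) → (Fin n ⊕ Fin m) → Prop :=
    Relation.TransGen (HEdge N) with hT
  have hTtrans : ∀ {x y z}, T x y → T y z → T x z := fun h h' => h.trans h'
  have hTirr : ∀ x, ¬ T x x := transGen_irrefl h1 h2 h3
  let r : (Fin n ⊕ Fin m) → (Fin n ⊕ Fin m) → Prop := fun x y => T x y ∨ x = y
  haveI : IsPartialOrder (Fin n ⊕ Fin m) r :=
    { refl := fun x => Or.inr rfl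
      trans := by
        rintro x y z (h | rfl) (h' | rfl)
        · exact Or.inl (hTtrans h h')
        · exact Or.inl h
        · exact Or.inl h'
        · exact Or.inr rfl
      antisymm := by
        rintro x y (h | rfl) h'
        · rcases h' with h' | rfl
          · exact absurd (hTtrans h h') (hTirr x)
          · rfl
        · rfl }
  obtain ⟨s, hlin, hrs⟩ := extend_partialOrder r
  haveI := hlin
  have strans : ∀ {a b c}, s a b → s b c → s a c := fun h h' => IsTrans.trans _ _ _ h h'
  have santi : ∀ {a b}, s a b → s b a → a = b := fun h h' => Std.Antisymm.antisymm _ _ h h'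
  have stotal : ∀ a b, s a b ∨ s b a := Std.Total.total
  let rank : (Fin n ⊕ Fin m) → ℕ := fun x =>
    (Finset.univ.filter (fun y => s y x ∧ y ≠ x)).card
  have hsmono : ∀ {x y}, s x y → x ≠ y → rank x < rank y := by
    intro x y hxy hne
    apply Finset.card_lt_card
    constructor
    · intro z hz
      simp only [Finset.mem_filter, Finset.mem_univ, true_and] at hz ⊢
      refine ⟨strans hz.1 hxy, ?_⟩
      intro hzy; subst hzy
      exact hne (santi hxy hz.1)
    · intro hsub
      have hx : x ∈ Finset.univ.filter (fun y' => s y' y ∧ y' ≠ y) := by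
        simp only [Finset.mem_filter, Finset.mem_univ, true_and]
        exact ⟨hxy, hne⟩
      have := hsub hx
      simp only [Finset.mem_filter, Finset.mem_univ, true_and] at this
      exact this.2 rfl
  have hTrank : ∀ {x y}, T x y → rank x < rank y := by
    intro x y h
    have hne : x ≠ y := by rintro rfl; exact hTirr x h
    exact hsmono (hrs _ _ (Or.inl h)) hne
  have hrank_inj : ∀ {x y}, rank x = rank y → x = y := by
    intro x y h
    by_contra hne
    rcases stotal x y with hxy | hyx
    · exact absurd h (Nat.ne_of_lt (hsmono hxy hne))
    · exact absurd h.symm (Nat.ne_of_lt (hsmono hyx (Ne.symm hne)))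
  refine ⟨fun j => rank (Sum.inl j), fun p => rank (Sum.inr p), ?_, ?_, ?_, ?_⟩
  · intro j j' hjj
    exact hTrank (Relation.TransGen.single (show HEdge N (Sum.inl j) (Sum.inl j') from hjj))
  · intro p p' hpp
    exact hTrank (Relation.TransGen.single (show HEdge N (Sum.inr p) (Sum.inr p') from hpp))
  · intro i p h
    exact absurd (hrank_inj h) (by simp)
  · intro j p
    constructor
    · intro hN
      refine ⟨?_, ⟨p, le_refl _, hN⟩, ⟨j, le_refl _, hN⟩⟩
      exact hTrank (Relation.TransGen.single (show HEdge N (Sum.inl j) (Sum.inr p) from hN))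
    · rintro ⟨hlt, ⟨q, hpq, hjq⟩, ⟨i, hij, hip⟩⟩
      by_contra hjp
      have hjp' : N j p = false := Bool.not_eq_true _ ▸ hjp
      have hij' : i < j := by
        rcases lt_or_eq_of_le hij with h | rfl
        · exact h
        · rw [hip] at hjp'; exact absurd hjp' (by simp)
      have hpq' : p < q := by
        rcases lt_or_eq_of_le hpq with h | rfl
        · exact h
        · rw [hjq] at hjp'; exact absurd hjp' (by simp)
      have hS : SCond N p j := ⟨i, hij', q, hpq', hip, hjp', hjq⟩
      have : rank (Sum.inr p) < rank (Sum.inl j) :=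
        hTrank (Relation.TransGen.single ((scond_iff N p j).mpr hS))
      exact absurd this (lt_asymm hlt)

/-- A Stick order forbids all three patterns. -/
theorem stickOrder_noPatterns {N : Fin n → Fin m → Bool} (h : StickOrder N) :
    ¬ P1 N ∧ ¬ P2 N ∧ ¬ P3 N := by
  obtain ⟨ra, rb, hra, hrb, _, hiff⟩ := h
  refine ⟨?_, ?_, ?_⟩
  · rintro ⟨i, j, k, hij, hjk, p, q, r, hpq, hqr, hiq, hjq, hjr, hkp⟩
    have hk : ra k < rb p := ((hiff k p).mp hkp).1
    have : N j q = true := (hiff j q).mpr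
      ⟨lt_trans (lt_trans (hra hjk) hk) (hrb hpq),
        ⟨r, le_of_lt hqr, hjr⟩, ⟨i, le_of_lt hij, hiq⟩⟩
    rw [this] at hjq; exact absurd hjq (by simp)
  · rintro ⟨i, j, k, hij, hjk, p, q, hpq, hip, hjp, hjq, hkp⟩
    have hk : ra k < rb p := ((hiff k p).mp hkp).1
    have : N j p = true := (hiff j p).mpr
      ⟨lt_trans (hra hjk) hk, ⟨q, le_of_lt hpq, hjq⟩, ⟨i, le_of_lt hij, hip⟩⟩
    rw [this] at hjp; exact absurd hjp (by simp)
  · rintro ⟨i, j, hij, p, q, r, hpq, hqr, hiq, hjp, hjq, hjr⟩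
    have hj : ra j < rb p := ((hiff j p).mp hjp).1
    have : N j q = true := (hiff j q).mpr
      ⟨lt_trans hj (hrb hpq), ⟨r, le_of_lt hqr, hjr⟩, ⟨i, le_of_lt hij, hiq⟩⟩
    rw [this] at hjq; exact absurd hjq (by simp)

end Aux

theorem stmt_8 {n m : ℕ} (M : Fin n → Fin m → Bool) :
    (∃ (σ : Equiv.Perm (Fin n)) (τ : Equiv.Perm (Fin m)),
        StickOrder (fun i p => M (σ i) (τ p))) ↔
    (∃ (σ : Equiv.Perm (Fin n)) (τ : Equiv.Perm (Fin m)),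
        ¬ P1 (fun i p => M (σ i) (τ p)) ∧ ¬ P2 (fun i p => M (σ i) (τ p)) ∧
        ¬ P3 (fun i p => M (σ i) (τ p))) := by
  constructor
  · rintro ⟨σ, τ, h⟩
    exact ⟨σ, τ, stickOrder_noPatterns h⟩
  · rintro ⟨σ, τ, h1, h2, h3⟩
    exact ⟨σ, τ, noPatterns_stickOrder h1 h2 h3⟩
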